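/- Let k be an integer with 0 ≤ k ≤ a + 1 such that k ≠ a − Σ_{t ∈ T} a_t + 1 for every subset T ⊆ I = I_0 ∖ {0}. Then G(q^{−k}) = 0. -/

import Mathlib

/- Vanishing of the rational function G(X) at X = q^{-k} for non-exceptional k. -/
open Finset

noncomputable section

abbrev K : Type := RatFunc ℚ

/-- the field `ℚ(q)(X)`. -/
abbrev KX : Type := RatFunc K

/-- the indeterminate `q`. -/
def q : K := RatFunc.X

/-- the indeterminate `X`. -/
def XX : KX := RatFunc.X

/-- constants `ℚ(q) → ℚ(q)(X)`. -/
def CK : K →+* KX := RatFunc.C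

/-- `(q)_k`. -/
def qfac (k : ℕ) : K := ∏ t ∈ range k, (1 - q ^ (t + 1))

/-- `σ'(T) = ∑_{t ∈ T, t ≠ 0} a_t`. -/
def sigma' (a : ℕ → ℕ) (T : Finset ℕ) : ℕ := ∑ t ∈ T.erase 0, a t

/-- `w i = a i` for `i ∉ T` and `w i = 0` for `i ∈ T`. -/
def wgt (a : ℕ → ℕ) (T : Finset ℕ) (t : ℕ) : ℕ := if t ∈ T then 0 else a t

/-- `L̃(T) = ∑_{l ∈ I₀} ∑_{i=max(l,1)}^n w_i − ∑_{l=1}^ν p_l ∑_{i=j_l}^n w_i`. -/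
def Ltil (n : ℕ) {m ν : ℕ} (i : Fin m → ℕ) (j p : Fin ν → ℕ) (a : ℕ → ℕ)
    (T : Finset ℕ) : ℤ :=
  (∑ l ∈ Finset.image i univ, ∑ t ∈ Icc (max l 1) n, (wgt a T t : ℤ))
    - ∑ k : Fin ν, (p k : ℤ) * ∑ t ∈ Icc (j k) n, (wgt a T t : ℤ)

/-- the rational function
`G(X) = (∏_{i=1}^a (1 - X q^i) / ((q)_{a₁}⋯(q)_{aₙ})) ∑_{∅≠T⊆I₀} (-1)^{|T|} q^{L̃(T)} S_T(X)`,
where `S_T(X) = (1 - X q^{σ'(T)})/(1 - q^{1+a-σ'(T)})` if `0 ∈ T`, and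
`S_T(X) = X (1 - q^{σ'(T)})/(1 - X q^{1+a-σ'(T)})` if `0 ∉ T`. -/
def G (n : ℕ) {m ν : ℕ} (i : Fin m → ℕ) (j p : Fin ν → ℕ) (a : ℕ → ℕ) : KX :=
  ((∏ t ∈ range (∑ k ∈ Icc 1 n, a k), (1 - XX * CK (q ^ (t + 1)))) /
      CK (∏ k ∈ Icc 1 n, qfac (a k))) *
    ∑ T ∈ (Finset.image i univ).powerset.filter (fun T => T.Nonempty),
      (-1 : KX) ^ T.card * CK (q ^ Ltil n i j p a T) *
        (if (0 : ℕ) ∈ T then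
          (1 - XX * CK (q ^ sigma' a T)) /
            CK (1 - q ^ ((1 + ∑ k ∈ Icc 1 n, a k : ℤ) - sigma' a T))
        else
          XX * CK (1 - q ^ sigma' a T) /
            (1 - XX * CK (q ^ ((1 + ∑ k ∈ Icc 1 n, a k : ℤ) - sigma' a T))))

/-! ### Auxiliary machinery: evaluation of elements of `KX` at a point of `K` -/

/-- `x : KX` is represented at `c` by polynomials `pn / pd` with `pd.eval c ≠ 0`,
and its value there is `v`. -/
def RepAt (c : K) (x : KX) (v : K) : Prop :=
  ∃ pn pd : Polynomial K, pd.eval c ≠ 0 ∧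
    x = algebraMap (Polynomial K) KX pn / algebraMap (Polynomial K) KX pd ∧
    pn.eval c / pd.eval c = v

theorem RepAt.eval {c : K} {x : KX} {v : K} (h : RepAt c x v) :
    RatFunc.eval (RingHom.id K) c x = v := by
  obtain ⟨pn, pd, hd, hx, hv⟩ := h
  have hd0 : pd ≠ 0 := by rintro rfl; simp at hd
  have hdenom : (x.denom).eval c ≠ 0 := by
    obtain ⟨e, he⟩ : x.denom ∣ pd := by
      have := RatFunc.denom_div_dvd pn pd
      rwa [← hx] at this
    intro h0
    apply hd
    rw [he, Polynomial.eval_mul, h0, zero_mul]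
  have hxd : x.denom ≠ 0 := x.denom_ne_zero
  have hne : (algebraMap (Polynomial K) KX) x.denom ≠ 0 := RatFunc.algebraMap_ne_zero hxd
  have hpd : (algebraMap (Polynomial K) KX) pd ≠ 0 := RatFunc.algebraMap_ne_zero hd0
  have key : pn * x.denom = x.num * pd := by
    apply RatFunc.algebraMap_injective K
    rw [map_mul, map_mul, ← div_eq_div_iff hpd hne, x.num_div_denom]
    exact hx.symm
  have keyc : pn.eval c * (x.denom).eval c = (x.num).eval c * pd.eval c := by
    have := congrArg (Polynomial.eval c) key
    simpa using this
  rw [RatFunc.eval, Polynomial.eval₂_eq_eval_map, Polynomial.eval₂_eq_eval_map,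
    Polynomial.map_id, Polynomial.map_id, ← hv, div_eq_div_iff hdenom hd]
  linear_combination -keyc

theorem RepAt.C {c : K} (r : K) : RepAt c (CK r) r :=
  ⟨Polynomial.C r, 1, by simp, by simp [CK, RatFunc.algebraMap_C], by simp⟩

theorem RepAt.X {c : K} : RepAt c XX c :=
  ⟨Polynomial.X, 1, by simp, by simp [XX, RatFunc.algebraMap_X], by simp⟩

theorem RepAt.one {c : K} : RepAt c 1 1 := by simpa using RepAt.C (c := c) 1

theorem RepAt.zero {c : K} : RepAt c 0 0 := by simpa using RepAt.C (c := c) 0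

theorem RepAt.add {c : K} {x y : KX} {v w : K} (hx : RepAt c x v) (hy : RepAt c y w) :
    RepAt c (x + y) (v + w) := by
  obtain ⟨p1, d1, hd1, hx1, hv1⟩ := hx
  obtain ⟨p2, d2, hd2, hx2, hv2⟩ := hy
  have hd10 : d1 ≠ 0 := by rintro rfl; simp at hd1
  have hd20 : d2 ≠ 0 := by rintro rfl; simp at hd2
  refine ⟨p1 * d2 + p2 * d1, d1 * d2, by simp [hd1, hd2], ?_, ?_⟩
  · rw [hx1, hx2]
    have h1 : algebraMap (Polynomial K) KX d1 ≠ 0 := RatFunc.algebraMap_ne_zero hd10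
    have h2 : algebraMap (Polynomial K) KX d2 ≠ 0 := RatFunc.algebraMap_ne_zero hd20
    field_simp
    simp only [map_mul, map_add]; ring
  · rw [← hv1, ← hv2]
    field_simp
    simp only [Polynomial.eval_mul, Polynomial.eval_add]; ring

theorem RepAt.mul {c : K} {x y : KX} {v w : K} (hx : RepAt c x v) (hy : RepAt c y w) :
    RepAt c (x * y) (v * w) := by
  obtain ⟨p1, d1, hd1, hx1, hv1⟩ := hx
  obtain ⟨p2, d2, hd2, hx2, hv2⟩ := hy
  refine ⟨p1 * p2, d1 * d2, by simp [hd1, hd2], ?_, ?_⟩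
  · rw [hx1, hx2, map_mul, map_mul, div_mul_div_comm]
  · rw [← hv1, ← hv2]
    simp [div_mul_div_comm]

theorem RepAt.neg {c : K} {x : KX} {v : K} (hx : RepAt c x v) : RepAt c (-x) (-v) := by
  obtain ⟨p1, d1, hd1, hx1, hv1⟩ := hx
  exact ⟨-p1, d1, hd1, by rw [hx1, map_neg]; ring, by rw [← hv1, Polynomial.eval_neg]; ring⟩

theorem RepAt.sub {c : K} {x y : KX} {v w : K} (hx : RepAt c x v) (hy : RepAt c y w) :
    RepAt c (x - y) (v - w) := by
  simpa [sub_eq_add_neg] using hx.add hy.neg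

theorem RepAt.div {c : K} {x y : KX} {v w : K} (hx : RepAt c x v) (hy : RepAt c y w)
    (hw : w ≠ 0) : RepAt c (x / y) (v / w) := by
  obtain ⟨p1, d1, hd1, hx1, hv1⟩ := hx
  obtain ⟨p2, d2, hd2, hx2, hv2⟩ := hy
  have hp2 : p2.eval c ≠ 0 := by
    intro h0; apply hw; rw [← hv2, h0, zero_div]
  have hp20 : p2 ≠ 0 := by rintro rfl; simp at hp2
  have hd20 : d2 ≠ 0 := by rintro rfl; simp at hd2
  have hd10 : d1 ≠ 0 := by rintro rfl; simp at hd1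
  refine ⟨p1 * d2, d1 * p2, by simp [hd1, hp2], ?_, ?_⟩
  · rw [hx1, hx2]
    have h2 : algebraMap (Polynomial K) KX p2 ≠ 0 := RatFunc.algebraMap_ne_zero hp20
    have h3 : algebraMap (Polynomial K) KX d2 ≠ 0 := RatFunc.algebraMap_ne_zero hd20
    have h1 : algebraMap (Polynomial K) KX d1 ≠ 0 := RatFunc.algebraMap_ne_zero hd10
    rw [map_mul, map_mul]
    field_simp
    try ring
  · rw [← hv1, ← hv2]
    simp only [Polynomial.eval_mul]
    field_simp
    try ring

theorem RepAt.pow {c : K} {x : KX} {v : K} (hx : RepAt c x v) (n : ℕ) :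
    RepAt c (x ^ n) (v ^ n) := by
  induction n with
  | zero => simpa using RepAt.one
  | succ n ih => rw [pow_succ, pow_succ]; exact ih.mul hx

theorem RepAt.sum {c : K} {α : Type*} {s : Finset α} {f : α → KX} {g : α → K}
    (h : ∀ t ∈ s, RepAt c (f t) (g t)) :
    RepAt c (∑ t ∈ s, f t) (∑ t ∈ s, g t) := by
  classical
  induction s using Finset.induction_on with
  | empty => simpa using RepAt.zero
  | insert b s hns ih =>
    rw [Finset.sum_insert hns, Finset.sum_insert hns]
    exact (h b (mem_insert_self b s)).add (ih fun t ht => h t (mem_insert_of_mem ht))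

theorem RepAt.prod {c : K} {α : Type*} {s : Finset α} {f : α → KX} {g : α → K}
    (h : ∀ t ∈ s, RepAt c (f t) (g t)) :
    RepAt c (∏ t ∈ s, f t) (∏ t ∈ s, g t) := by
  classical
  induction s using Finset.induction_on with
  | empty => simpa using RepAt.one
  | insert b s hns ih =>
    rw [Finset.prod_insert hns, Finset.prod_insert hns]
    exact (h b (mem_insert_self b s)).mul (ih fun t ht => h t (mem_insert_of_mem ht))

/-! ### Basic non-vanishing facts about `q` -/

theorem q_ne_zero : q ≠ 0 := RatFunc.X_ne_zero

theorem q_pow_ne_one {n : ℕ} (hn : n ≠ 0) : q ^ n ≠ 1 := by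
  intro h
  have hX : (Polynomial.X : Polynomial ℚ) ^ n = 1 := by
    apply RatFunc.algebraMap_injective ℚ
    rw [map_pow, map_one, RatFunc.algebraMap_X]
    exact h
  have h2 := congrArg Polynomial.natDegree hX
  rw [Polynomial.natDegree_X_pow, Polynomial.natDegree_one] at h2
  exact hn h2

theorem q_zpow_ne_one {z : ℤ} (hz : z ≠ 0) : q ^ z ≠ 1 := by
  intro h
  rcases lt_or_gt_of_ne hz with hlt | hgt
  · have h2 : q ^ (-z) = 1 := by rw [zpow_neg, h, inv_one]
    have hz' : ((-z).toNat : ℤ) = -z := Int.toNat_of_nonneg (by omega)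
    have h3 : q ^ ((-z).toNat) = 1 := by rw [← zpow_natCast, hz', h2]
    exact q_pow_ne_one (by omega) h3
  · have hz' : (z.toNat : ℤ) = z := Int.toNat_of_nonneg (by omega)
    have h3 : q ^ (z.toNat) = 1 := by rw [← zpow_natCast, hz', h]
    exact q_pow_ne_one (by omega) h3

theorem qfac_ne_zero (k : ℕ) : qfac k ≠ 0 := by
  unfold qfac
  apply Finset.prod_ne_zero_iff.mpr
  intro t _
  exact sub_ne_zero_of_ne (Ne.symm (q_pow_ne_one (Nat.succ_ne_zero t)))

/-! ### Combinatorial lemmas about `sigma'` and `Ltil` -/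

theorem sigma'_insert_zero (a : ℕ → ℕ) (T : Finset ℕ) (h0 : 0 ∉ T) :
    sigma' a (insert 0 T) = sigma' a T := by
  unfold sigma'
  rw [Finset.erase_insert h0, Finset.erase_eq_of_notMem h0]

theorem Ltil_insert_zero (n : ℕ) {m ν : ℕ} (i : Fin m → ℕ) (j p : Fin ν → ℕ)
    (a : ℕ → ℕ) (T : Finset ℕ) (h0 : 0 ∉ T) (hj0 : ∀ k, 0 < j k) :
    Ltil n i j p a (insert 0 T) = Ltil n i j p a T := by
  have hw : ∀ t : ℕ, 1 ≤ t → wgt a (insert 0 T) t = wgt a T t := by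
    intro t ht
    have htne : t ≠ 0 := by omega
    simp [wgt, Finset.mem_insert, htne]
  unfold Ltil
  congr 1
  · apply Finset.sum_congr rfl
    intro l _
    apply Finset.sum_congr rfl
    intro t ht
    rw [hw t (le_trans (le_max_right l 1) (Finset.mem_Icc.mp ht).1)]
  · apply Finset.sum_congr rfl
    intro l _
    congr 1
    apply Finset.sum_congr rfl
    intro t ht
    rw [hw t (le_trans (hj0 l) (Finset.mem_Icc.mp ht).1)]

/-- the value of the `T`-summand of `G` at `X = c`. -/
def gv (n aa : ℕ) {m ν : ℕ} (i : Fin m → ℕ) (j p : Fin ν → ℕ) (a : ℕ → ℕ)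
    (c : K) (T : Finset ℕ) : K :=
  (-1 : K) ^ T.card * q ^ Ltil n i j p a T *
    (if (0 : ℕ) ∈ T then
      (1 - c * q ^ sigma' a T) / (1 - q ^ ((1 + aa : ℤ) - sigma' a T))
    else
      c * (1 - q ^ sigma' a T) / (1 - c * q ^ ((1 + aa : ℤ) - sigma' a T)))

/-- If `0 ≤ k ≤ a + 1` and `k ≠ a - σ(T) + 1` for every subset
`T ⊆ I = I₀ \ {0}`, then `G(q^{-k}) = 0`. -/
theorem G_eval_vanishes (n m ν : ℕ) (i : Fin m → ℕ) (j p : Fin ν → ℕ)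
    (hm : 0 < m)
    (hi_mono : StrictMono i) (hi0 : i ⟨0, hm⟩ = 0) (hin : ∀ k, i k < n)
    (hj_mono : StrictMono j) (hj0 : ∀ k, 0 < j k) (hjn : ∀ k, j k ≤ n)
    (hij : ∀ k l, i k ≠ j l)
    (hp : ∀ k, 0 < p k) (hpm : ∑ k, p k = m)
    (a : ℕ → ℕ) (k : ℕ)
    (hk : k ≤ (∑ t ∈ Icc 1 n, a t) + 1)
    (hkT : ∀ T ⊆ (Finset.image i univ).erase 0,
      (k : ℤ) ≠ (∑ t ∈ Icc 1 n, a t : ℤ) - (∑ t ∈ T, a t) + 1) :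
    RatFunc.eval (RingHom.id K) (q ^ (-(k : ℤ))) (G n i j p a) = 0 := by
  classical
  set aa : ℕ := ∑ t ∈ Icc 1 n, a t with haa
  set c : K := q ^ (-(k : ℤ)) with hc
  -- basic facts
  have hD : (∏ x ∈ Icc 1 n, qfac (a x)) ≠ 0 :=
    Finset.prod_ne_zero_iff.mpr fun x _ => qfac_ne_zero _
  have hσle : ∀ T : Finset ℕ, T ⊆ Finset.image i univ → sigma' a T ≤ aa := by
    intro T hT
    simp only [sigma', haa]
    apply Finset.sum_le_sum_of_subset
    intro t ht
    have h1 := Finset.mem_of_mem_erase ht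
    have h2 : t ≠ 0 := Finset.ne_of_mem_erase ht
    obtain ⟨kk, -, hkk⟩ := Finset.mem_image.mp (hT h1)
    have h3 := hin kk
    rw [Finset.mem_Icc]
    omega
  have he : ∀ T : Finset ℕ, T ⊆ Finset.image i univ →
      (1 - q ^ ((1 + aa : ℤ) - sigma' a T)) ≠ 0 := by
    intro T hT
    apply sub_ne_zero_of_ne
    apply Ne.symm
    apply q_zpow_ne_one
    have := hσle T hT
    omega
  have hw : ∀ T : Finset ℕ, T ⊆ Finset.image i univ → 0 ∉ T →
      (1 - c * q ^ ((1 + aa : ℤ) - sigma' a T)) ≠ 0 := by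
    intro T hT h0
    have hke := hkT T (Finset.subset_erase.mpr ⟨hT, h0⟩)
    have hσ : sigma' a T = ∑ t ∈ T, a t := by
      simp only [sigma', Finset.erase_eq_of_notMem h0]
    rw [hc, ← zpow_add₀ q_ne_zero]
    apply sub_ne_zero_of_ne
    apply Ne.symm
    apply q_zpow_ne_one
    have haa' : (aa : ℤ) = ∑ t ∈ Icc 1 n, (a t : ℤ) := by rw [haa]; push_cast; ring
    rw [hσ]
    push_cast at hke ⊢
    omega
  -- the main representation of G at c
  have hrep : RepAt c (G n i j p a)
      ((∏ t ∈ range aa, (1 - c * q ^ (t + 1))) / (∏ x ∈ Icc 1 n, qfac (a x)) *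
        ∑ T ∈ (Finset.image i univ).powerset.filter (fun T => T.Nonempty),
          gv n aa i j p a c T) := by
    unfold G
    rw [← haa]
    refine RepAt.mul
      (RepAt.div (RepAt.prod fun t _ => RepAt.one.sub (RepAt.X.mul (RepAt.C _)))
        (RepAt.C _) hD) (RepAt.sum ?_)
    intro T hT
    have hTsub : T ⊆ Finset.image i univ :=
      Finset.mem_powerset.mp (Finset.mem_filter.mp hT).1
    by_cases h0 : (0 : ℕ) ∈ T
    · simp only [gv, if_pos h0]
      exact (((RepAt.one.neg).pow T.card).mul (RepAt.C _)).mul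
        ((RepAt.one.sub (RepAt.X.mul (RepAt.C _))).div (RepAt.C _) (he T hTsub))
    · simp only [gv, if_neg h0]
      exact (((RepAt.one.neg).pow T.card).mul (RepAt.C _)).mul
        ((RepAt.X.mul (RepAt.C _)).div (RepAt.one.sub (RepAt.X.mul (RepAt.C _)))
          (hw T hTsub h0))
  rw [hrep.eval]
  rcases Nat.eq_zero_or_pos k with hk0 | hk1
  · -- k = 0 : the sum vanishes (pairing T ↔ insert 0 T)
    have hc1 : c = 1 := by rw [hc, hk0]; simp
    apply mul_eq_zero_of_right
    have hgpair : ∀ T : Finset ℕ, 0 ∉ T →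
        gv n aa i j p a c (insert 0 T) = - gv n aa i j p a c T := by
      intro T h0
      rw [hc1]
      unfold gv
      rw [if_pos (Finset.mem_insert_self 0 T), if_neg h0,
        sigma'_insert_zero a T h0, Ltil_insert_zero n i j p a T h0 hj0,
        Finset.card_insert_of_notMem h0]
      ring
    have h00 : (0 : ℕ) ∈ Finset.image i univ :=
      Finset.mem_image.mpr ⟨⟨0, hm⟩, Finset.mem_univ _, hi0⟩
    have hfull : ∑ T ∈ (Finset.image i univ).powerset, gv n aa i j p a c T = 0 := by
      rw [← Finset.insert_erase h00,
        Finset.sum_powerset_insert (Finset.notMem_erase 0 _)]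
      have h2 : ∑ T ∈ ((Finset.image i univ).erase 0).powerset,
          gv n aa i j p a c (insert 0 T)
          = ∑ T ∈ ((Finset.image i univ).erase 0).powerset, - gv n aa i j p a c T :=
        Finset.sum_congr rfl fun T hT => hgpair T
          (fun hmem => Finset.notMem_erase 0 _ (Finset.mem_powerset.mp hT hmem))
      rw [h2]
      simp
    have hsplit := Finset.sum_filter_add_sum_filter_not
      ((Finset.image i univ).powerset) (fun T => T.Nonempty) (gv n aa i j p a c)
    have hempty : ∑ T ∈ (Finset.image i univ).powerset.filter
        (fun T => ¬ T.Nonempty), gv n aa i j p a c T = 0 := by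
      apply Finset.sum_eq_zero
      intro T hT
      have hTe : T = ∅ := Finset.not_nonempty_iff_eq_empty.mp (Finset.mem_filter.mp hT).2
      subst hTe
      simp [gv, sigma']
    rw [hempty, add_zero, hfull] at hsplit
    exact hsplit
  · -- 1 ≤ k ≤ aa : the prefactor vanishes
    apply mul_eq_zero_of_left
    have h2 := hkT ∅ (Finset.empty_subset _)
    simp only [Finset.sum_empty] at h2
    have haa' : (aa : ℤ) = ∑ t ∈ Icc 1 n, (a t : ℤ) := by rw [haa]; push_cast; ring
    have hka : k ≤ aa := by omega
    apply div_eq_zero_iff.mpr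
    left
    apply Finset.prod_eq_zero (Finset.mem_range.mpr (show k - 1 < aa by omega))
    have h3 : k - 1 + 1 = k := by omega
    rw [h3, hc, ← zpow_natCast q k, ← zpow_add₀ q_ne_zero]
    simp

end
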